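/- For every real number x with |x| ≥ 1 and every t ∈ [0,1] and r ∈ (0,1/2), the bound |(i ± x(1+x²)^{-tr})^{-1}| ≤ 2^r |x|^{2r-1} holds (where i is the imaginary unit and the inverse is taken in ℂ). -/

import Mathlib

open scoped ZeroAtInfty
open Set MeasureTheory

variable {H : Type*} [NormedAddCommGroup H] [InnerProductSpace ℂ H] [CompleteSpace H]

theorem stmt0 (r t x ε : ℝ) (hr : r ∈ Ioo (0:ℝ) (1/2)) (ht : t ∈ Icc (0:ℝ) 1)
    (hε : ε = 1 ∨ ε = -1) (hx : 1 ≤ |x|) :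
    ‖(Complex.I + ((ε * (x * (1 + x ^ 2) ^ (-(t * r))) : ℝ) : ℂ))⁻¹‖ ≤
      (2:ℝ) ^ r * |x| ^ (2 * r - 1) := by
  obtain ⟨hr0, hr1⟩ := hr
  obtain ⟨ht0, ht1⟩ := ht
  set A : ℝ := ε * (x * (1 + x ^ 2) ^ (-(t * r))) with hA
  have hx0 : (0:ℝ) < |x| := lt_of_lt_of_le one_pos hx
  have hx2 : (1:ℝ) ≤ x ^ 2 := by nlinarith [sq_abs x]
  have h1x2 : (0:ℝ) < 1 + x ^ 2 := by positivity
  have hεabs : |ε| = 1 := by rcases hε with h | h <;> simp [h]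
  have habsA : |A| = |x| * (1 + x ^ 2) ^ (-(t * r)) := by
    rw [hA, abs_mul, hεabs, one_mul, abs_mul,
      abs_of_nonneg (Real.rpow_nonneg h1x2.le _)]
  have htr0 : 0 ≤ t * r := mul_nonneg ht0 hr0.le
  have htr : t * r ≤ r := by nlinarith
  have hb1 : ((2:ℝ) * x ^ 2) ^ (-(t * r)) ≤ (1 + x ^ 2) ^ (-(t * r)) :=
    Real.rpow_le_rpow_of_nonpos h1x2 (by nlinarith) (by linarith)
  have hb2 : ((2:ℝ) * x ^ 2) ^ (-(t * r))
      = (2:ℝ) ^ (-(t * r)) * |x| ^ (-(2 * (t * r))) := by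
    rw [Real.mul_rpow (by norm_num) (by positivity)]
    congr 1
    rw [← sq_abs x, ← Real.rpow_two, ← Real.rpow_mul hx0.le]
    ring_nf
  have hb4 : (2:ℝ) ^ (-r) ≤ (2:ℝ) ^ (-(t * r)) :=
    Real.rpow_le_rpow_of_exponent_le one_le_two (by linarith)
  have hb5 : |x| ^ (-(2 * r)) ≤ |x| ^ (-(2 * (t * r))) :=
    Real.rpow_le_rpow_of_exponent_le hx (by nlinarith)
  have key : (2:ℝ) ^ (-r) * |x| ^ (1 - 2 * r) ≤ |A| := by
    rw [habsA]
    have h1 : |x| ^ (1 - 2 * r) = |x| * |x| ^ (-(2 * r)) := by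
      rw [show (1 - 2 * r) = 1 + -(2 * r) by ring, Real.rpow_add hx0, Real.rpow_one]
    calc (2:ℝ) ^ (-r) * |x| ^ (1 - 2 * r)
        = |x| * ((2:ℝ) ^ (-r) * |x| ^ (-(2 * r))) := by rw [h1]; ring
      _ ≤ |x| * ((2:ℝ) ^ (-(t * r)) * |x| ^ (-(2 * (t * r)))) := by
          apply mul_le_mul_of_nonneg_left _ hx0.le
          exact mul_le_mul hb4 hb5 (Real.rpow_nonneg hx0.le _)
            (Real.rpow_nonneg (by norm_num) _)
      _ = |x| * ((2:ℝ) * x ^ 2) ^ (-(t * r)) := by rw [hb2]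
      _ ≤ |x| * (1 + x ^ 2) ^ (-(t * r)) :=
          mul_le_mul_of_nonneg_left hb1 hx0.le
  have hkeypos : (0:ℝ) < (2:ℝ) ^ (-r) * |x| ^ (1 - 2 * r) := by positivity
  have habsle : (2:ℝ) ^ (-r) * |x| ^ (1 - 2 * r) ≤ ‖Complex.I + (A:ℂ)‖ := by
    refine key.trans ?_
    have : |(Complex.I + (A:ℂ)).re| ≤ ‖Complex.I + (A:ℂ)‖ :=
      Complex.abs_re_le_norm _
    simpa using this
  have hnorm : ‖(Complex.I + (A:ℂ))⁻¹‖ = ‖Complex.I + (A:ℂ)‖⁻¹ := by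
    simp [norm_inv]
  rw [hnorm]
  have hinv : ‖Complex.I + (A:ℂ)‖⁻¹
      ≤ ((2:ℝ) ^ (-r) * |x| ^ (1 - 2 * r))⁻¹ :=
    inv_anti₀ hkeypos habsle
  refine hinv.trans_eq ?_
  rw [mul_inv, ← Real.rpow_neg (by norm_num : (0:ℝ) ≤ 2),
    ← Real.rpow_neg hx0.le]
  ring_nf
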